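/- Let W be an invertible operator on H ⊕ H with W*JW ≤ J, J = [[0,−I],[−I,0]]. If A, B are positive real operators in the domain of T_W with A ∼ B, i.e. A − B = Re(A)^{1/2} X̃ Re(B)^{1/2} for a bounded operator X̃, then T_W[A] − T_W[B] = Re(T_W[A])^{1/2} X̃_W Re(T_W[B])^{1/2} for some bounded operator X̃_W with ‖X̃_W‖ ≤ ‖X̃‖. -/

import Mathlib

open ContinuousLinearMap

variable {H : Type*} [NormedAddCommGroup H] [InnerProductSpace ℂ H] [CompleteSpace H]

/-- The real part `(T + T*)/2` of a bounded operator. -/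
noncomputable def opRe (T : H →L[ℂ] H) : H →L[ℂ] H :=
  (2 : ℂ)⁻¹ • (T + ContinuousLinearMap.adjoint T)

/-- The positive square root of the real part of an operator. -/
noncomputable def sqrtRe (T : H →L[ℂ] H) : H →L[ℂ] H := CFC.sqrt (opRe T)

set_option maxHeartbeats 1000000
set_option synthInstance.maxHeartbeats 400000

namespace Stmt17Aux

lemma re_symm (x y : H) : (inner ℂ x y : ℂ).re = (inner ℂ y x : ℂ).re := by
  rw [← inner_conj_symm x y]
  exact Complex.conj_re _

lemma inner_sa {S : H →L[ℂ] H} (hS : IsSelfAdjoint S) (x y : H) :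
    (inner ℂ (S x) y : ℂ) = (inner ℂ x (S y) : ℂ) := by
  conv_lhs => rw [← hS.adjoint_eq]
  exact adjoint_inner_left S y x

lemma normsq (x : H) : (inner ℂ x x : ℂ).re = ‖x‖ ^ 2 := by
  have := inner_self_eq_norm_sq (𝕜 := ℂ) (E := H) x
  simpa using this

lemma comp_one' (f : H →L[ℂ] H) : f ∘L (1 : H →L[ℂ] H) = f := by
  rw [ContinuousLinearMap.one_def, ContinuousLinearMap.comp_id]

lemma isSelfAdjoint_opRe (T : H →L[ℂ] H) : IsSelfAdjoint (opRe T) := by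
  have h1 : IsSelfAdjoint (T + ContinuousLinearMap.adjoint T) := by
    rw [isSelfAdjoint_iff, star_add, ContinuousLinearMap.star_eq_adjoint,
      ContinuousLinearMap.star_eq_adjoint, adjoint_adjoint, add_comm]
  have h2 : IsSelfAdjoint ((2:ℂ)⁻¹) := by
    rw [isSelfAdjoint_iff, Complex.star_def, map_inv₀, map_ofNat]
  have h3 := h2.smul h1
  rw [opRe]
  exact h3

lemma re_inner_opRe (T : H →L[ℂ] H) (x : H) :
    (inner ℂ (opRe T x) x : ℂ).re = (inner ℂ (T x) x : ℂ).re := by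
  rw [opRe]
  simp only [ContinuousLinearMap.smul_apply, ContinuousLinearMap.add_apply,
    inner_smul_left, inner_add_left]
  have h1 : (inner ℂ (ContinuousLinearMap.adjoint T x) x : ℂ).re = (inner ℂ (T x) x : ℂ).re := by
    rw [adjoint_inner_left]
    exact re_symm x (T x)
  have : (starRingEnd ℂ) (2 : ℂ)⁻¹ = (2:ℂ)⁻¹ := by
    rw [map_inv₀, map_ofNat]
  rw [this]
  rw [Complex.mul_re]
  simp only [Complex.add_re, Complex.add_im]
  rw [h1]
  norm_num
  ring

lemma sqrtRe_sa (T : H →L[ℂ] H) : IsSelfAdjoint (sqrtRe T) :=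
  IsSelfAdjoint.of_nonneg (CFC.sqrt_nonneg _)

lemma sqrtRe_mul_self (T : H →L[ℂ] H) (hT : (opRe T).IsPositive) :
    sqrtRe T ∘L sqrtRe T = opRe T := by
  have h0 : (0:H →L[ℂ] H) ≤ opRe T := (nonneg_iff_isPositive _).mpr hT
  exact CFC.sqrt_mul_sqrt_self (opRe T) h0

lemma norm_sqrtRe_sq (T : H →L[ℂ] H) (hT : (opRe T).IsPositive) (x : H) :
    ‖sqrtRe T x‖ ^ 2 = (inner ℂ (T x) x : ℂ).re := by
  have h1 : (inner ℂ (sqrtRe T x) (sqrtRe T x) : ℂ) = inner ℂ (opRe T x) x := by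
    rw [inner_sa (sqrtRe_sa T), ← comp_apply, sqrtRe_mul_self T hT]
    exact (inner_sa (isSelfAdjoint_opRe T) x x).symm
  rw [← normsq, h1, re_inner_opRe]

lemma rsmul (δ : ℝ) (y : H) : δ • y = (δ : ℂ) • y := by
  rw [← smul_one_smul ℂ δ y, Complex.real_smul, mul_one]

lemma le_of_sq_le_sq {a b : ℝ} (ha : 0 ≤ a) (hb : 0 ≤ b) (h : a ^ 2 ≤ b ^ 2) : a ≤ b := by
  nlinarith

lemma douglas (F E : H →L[ℂ] H) (hF : IsSelfAdjoint F) (hEF : ∀ x, ‖E x‖ ≤ ‖F x‖) :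
    ∃ M : H →L[ℂ] H, ‖M‖ ≤ 1 ∧ M ∘L F = E := by
  classical
  set P : H →L[ℂ] H := F * F with hPdef
  have hPpos : (0:H →L[ℂ] H) ≤ P := by
    have h := star_mul_self_nonneg F
    rwa [hF.star_eq] at h
  have hPsa : IsSelfAdjoint P := IsSelfAdjoint.of_nonneg hPpos
  have hPspec : ∀ t ∈ spectrum ℝ P, 0 ≤ t := fun t ht => spectrum_nonneg_of_nonneg hPpos ht
  have hPapp : ∀ y : H, P y = F (F y) := fun y => rfl
  have hPy : ∀ y : H, (inner ℂ (P y) y : ℂ).re = ‖F y‖ ^ 2 := by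
    intro y
    have h1 : (inner ℂ (P y) y : ℂ) = inner ℂ (F y) (F y) := by
      rw [hPapp, inner_sa hF]
    rw [h1, normsq]
  set δ : ℕ → ℝ := fun n => 1 / ((n:ℝ) + 1) with hδdef
  have hδpos : ∀ n, 0 < δ n := fun n => by positivity
  have hcont : ∀ n, ContinuousOn (fun t : ℝ => (t + δ n)⁻¹) (spectrum ℝ P) := by
    intro n
    apply ContinuousOn.inv₀
    · fun_prop
    · intro t ht
      have h1 := hPspec t ht
      have h2 := hδpos n
      have : 0 < t + δ n := by linarith
      exact ne_of_gt this
  set Q : ℕ → (H →L[ℂ] H) := fun n => cfc (fun t : ℝ => (t + δ n)⁻¹) P with hQdef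
  -- Q n is the two-sided inverse of P + δ n • 1
  have hQR : ∀ n, Q n * (P + δ n • 1) = 1 := by
    intro n
    have e1 : cfc (fun t : ℝ => δ n + t) P = δ n • 1 + P := by
      rw [cfc_const_add (δ n) (fun t : ℝ => t) P (by fun_prop) hPsa, cfc_id' ℝ P hPsa,
        Algebra.algebraMap_eq_smul_one]
    have e2 : Q n * cfc (fun t : ℝ => δ n + t) P = 1 := by
      rw [hQdef, ← cfc_mul _ _ P (hcont n) (by fun_prop)]
      have heq : (spectrum ℝ P).EqOn (fun t : ℝ => (t + δ n)⁻¹ * (δ n + t)) 1 := by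
        intro t ht
        have h1 := hPspec t ht
        have h2 := hδpos n
        have hne : t + δ n ≠ 0 := ne_of_gt (by linarith)
        simp only [Pi.one_apply]
        rw [add_comm (δ n) t, inv_mul_cancel₀ hne]
      rw [cfc_congr heq]
      exact cfc_one ℝ P hPsa
    rw [e1] at e2
    rwa [add_comm (δ n • (1:H →L[ℂ] H)) P] at e2
  have hQPcomm : ∀ n, Q n * P = P * Q n := by
    intro n
    have h := cfc_commute_cfc (fun t : ℝ => (t + δ n)⁻¹) (id : ℝ → ℝ) P
    rw [cfc_id ℝ P hPsa] at h
    exact h.eq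
  have hRQ : ∀ n, (P + δ n • 1) * Q n = 1 := by
    intro n
    have h1 : (P + δ n • 1) * Q n = Q n * (P + δ n • 1) := by
      rw [add_mul, mul_add, ← hQPcomm n, smul_mul_assoc, mul_smul_comm, one_mul, mul_one]
    rw [h1, hQR n]
  have hFR : ∀ n, F * (P + δ n • 1) = (P + δ n • 1) * F := by
    intro n
    have h1 : F * P = P * F := by
      rw [hPdef, ← mul_assoc, mul_assoc]
    rw [mul_add, add_mul, h1, mul_smul_comm, smul_mul_assoc, one_mul, mul_one]
  have hFQ : ∀ n, F * Q n = Q n * F := by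
    intro n
    calc F * Q n = 1 * (F * Q n) := (one_mul _).symm
      _ = (Q n * (P + δ n • 1)) * (F * Q n) := by rw [hQR n]
      _ = Q n * (((P + δ n • 1) * F) * Q n) := by rw [mul_assoc, ← mul_assoc (P + δ n • 1)]
      _ = Q n * ((F * (P + δ n • 1)) * Q n) := by rw [hFR n]
      _ = Q n * (F * ((P + δ n • 1) * Q n)) := by rw [mul_assoc F]
      _ = Q n * F := by rw [hRQ n, mul_one]
  -- operator identity for the error term
  have hQP1 : ∀ n, Q n * P = 1 - δ n • Q n := by
    intro n
    have h := hQR n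
    rw [mul_add, mul_smul_comm, mul_one] at h
    exact eq_sub_of_add_eq h
  have hMF : ∀ n, (E * Q n * F) * F = E - δ n • (E * Q n) := by
    intro n
    calc (E * Q n * F) * F = E * (Q n * (F * F)) := by
          rw [mul_assoc, mul_assoc]
      _ = E * (Q n * P) := by rw [← hPdef]
      _ = E - δ n • (E * Q n) := by
          rw [hQP1 n, mul_sub, mul_one, mul_smul_comm]
  -- pointwise facts
  have hsurj : ∀ n (x : H), (P + δ n • 1) (Q n x) = x := by
    intro n x
    have h := DFunLike.congr_fun (hRQ n) x
    rw [ContinuousLinearMap.mul_apply, ContinuousLinearMap.one_apply] at h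
    exact h
  have hRapp : ∀ n (y : H), (P + δ n • 1) y = P y + (δ n : ℂ) • y := by
    intro n y
    rw [ContinuousLinearMap.add_apply, ContinuousLinearMap.smul_apply,
      ContinuousLinearMap.one_apply, rsmul]
  have hRsq : ∀ n (y : H), ‖(P + δ n • 1) y‖ ^ 2
      = ‖P y‖ ^ 2 + 2 * δ n * ‖F y‖ ^ 2 + (δ n) ^ 2 * ‖y‖ ^ 2 := by
    intro n y
    rw [hRapp n y]
    have h1 := norm_add_sq (𝕜 := ℂ) (P y) ((δ n : ℂ) • y)
    have h2 : (inner ℂ (P y) ((δ n : ℂ) • y) : ℂ) = (δ n : ℂ) * inner ℂ (P y) y :=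
      inner_smul_right _ _ _
    have h3 : RCLike.re (inner ℂ (P y) ((δ n : ℂ) • y) : ℂ) = δ n * ‖F y‖ ^ 2 := by
      rw [h2]
      have : ((δ n : ℂ) * inner ℂ (P y) y).re = δ n * (inner ℂ (P y) y : ℂ).re := by
        simp [Complex.mul_re]
      rw [RCLike.re_to_complex, this, hPy]
    have h4 : ‖(δ n : ℂ) • y‖ = δ n * ‖y‖ := by
      rw [norm_smul, Complex.norm_real, Real.norm_eq_abs, abs_of_pos (hδpos n)]
    rw [h1, h3, h4]
    ring
  have lemA : ∀ n (y : H), ‖P y‖ ≤ ‖(P + δ n • 1) y‖ := by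
    intro n y
    apply le_of_sq_le_sq (norm_nonneg _) (norm_nonneg _)
    rw [hRsq n y]
    have h1 := hδpos n
    have h2 : (0:ℝ) ≤ ‖F y‖ ^ 2 := sq_nonneg _
    have h3 : (0:ℝ) ≤ ‖y‖ ^ 2 := sq_nonneg _
    nlinarith
  have lemB : ∀ n (z : H), δ n * ‖F z‖ ≤ (Real.sqrt (δ n) / 2) * ‖(P + δ n • 1) z‖ := by
    intro n z
    have h1 : ‖F z‖ ^ 2 ≤ ‖P z‖ * ‖z‖ := by
      rw [← hPy z]
      calc (inner ℂ (P z) z : ℂ).re ≤ ‖(inner ℂ (P z) z : ℂ)‖ := Complex.re_le_norm _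
        _ ≤ ‖P z‖ * ‖z‖ := norm_inner_le_norm _ _
    apply le_of_sq_le_sq (by positivity) (by positivity)
    have h2 : ((Real.sqrt (δ n) / 2) * ‖(P + δ n • 1) z‖) ^ 2
        = (δ n / 4) * ‖(P + δ n • 1) z‖ ^ 2 := by
      have : Real.sqrt (δ n) ^ 2 = δ n := Real.sq_sqrt (hδpos n).le
      nlinarith [this]
    rw [h2, hRsq n z]
    have h3 := hδpos n
    nlinarith [sq_nonneg (‖P z‖ - δ n * ‖z‖), norm_nonneg (F z), norm_nonneg (P z),
      norm_nonneg z]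
  have bound1 : ∀ n (x : H), ‖(E * Q n * F) x‖ ≤ ‖x‖ := by
    intro n x
    have e1 : (E * Q n * F) x = E (Q n (F x)) := by
      simp [ContinuousLinearMap.mul_apply]
    have e2 : F (Q n (F x)) = P (Q n x) := by
      have h : ((F * Q n) * F) x = ((P * Q n)) x := by
        rw [hFQ n, mul_assoc, ← hPdef, hQPcomm n]
      simpa [ContinuousLinearMap.mul_apply] using h
    calc ‖(E * Q n * F) x‖ = ‖E (Q n (F x))‖ := by rw [e1]
      _ ≤ ‖F (Q n (F x))‖ := hEF _
      _ = ‖P (Q n x)‖ := by rw [e2]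
      _ ≤ ‖(P + δ n • 1) (Q n x)‖ := lemA n (Q n x)
      _ = ‖x‖ := by rw [hsurj n x]
  have bound2 : ∀ n (y : H), ‖(E * Q n * F) (F y) - E y‖ ≤ (Real.sqrt (δ n) / 2) * ‖y‖ := by
    intro n y
    have h := DFunLike.congr_fun (hMF n) y
    simp only [ContinuousLinearMap.mul_apply, ContinuousLinearMap.sub_apply,
      ContinuousLinearMap.smul_apply] at h
    have e0 : (E * Q n * F) (F y) - E y = -(δ n • E (Q n y)) := by
      simp only [ContinuousLinearMap.mul_apply]
      rw [h]
      abel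
    rw [e0, norm_neg, norm_smul, Real.norm_eq_abs, abs_of_pos (hδpos n)]
    calc δ n * ‖E (Q n y)‖ ≤ δ n * ‖F (Q n y)‖ := by
          have := hEF (Q n y)
          have h2 := (hδpos n).le
          exact mul_le_mul_of_nonneg_left this h2
      _ ≤ (Real.sqrt (δ n) / 2) * ‖(P + δ n • 1) (Q n y)‖ := lemB n (Q n y)
      _ = (Real.sqrt (δ n) / 2) * ‖y‖ := by rw [hsurj n y]
  -- convergence of the auxiliary bound
  have haux : ∀ c : ℝ, Filter.Tendsto (fun n => Real.sqrt (δ n) / 2 * c)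
      Filter.atTop (nhds 0) := by
    intro c
    have h1 : Filter.Tendsto δ Filter.atTop (nhds 0) := by
      rw [hδdef]
      exact tendsto_one_div_add_atTop_nhds_zero_nat
    have h2 : Filter.Tendsto (fun n => Real.sqrt (δ n)) Filter.atTop (nhds 0) := by
      have h3 := (Real.continuous_sqrt.tendsto 0).comp h1
      simpa [Function.comp_def] using h3
    have h3 := (h2.div_const 2).mul_const c
    simpa using h3
  -- pointwise limits exist
  have key : ∀ x : H, ∃ l : H,
      Filter.Tendsto (fun n => (E * Q n * F) x) Filter.atTop (nhds l) := by
    intro x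
    apply cauchySeq_tendsto_of_complete
    set K : Submodule ℂ H := (LinearMap.range (F : H →ₗ[ℂ] H)).topologicalClosure with hK
    haveI : CompleteSpace K := (Submodule.isClosed_topologicalClosure _).completeSpace_coe
    obtain ⟨x₁, hx₁, x₀, hx₀, hxsum⟩ := K.exists_add_mem_mem_orthogonal x
    have hFx₀ : F x₀ = 0 := by
      have hmem : F (F x₀) ∈ K := by
        apply Submodule.le_topologicalClosure
        exact LinearMap.mem_range.mpr ⟨F x₀, rfl⟩
      have h0 : (inner ℂ (F x₀) (F x₀) : ℂ) = 0 := by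
        rw [inner_sa hF x₀ (F x₀)]
        exact Submodule.inner_left_of_mem_orthogonal hmem hx₀
      exact inner_self_eq_zero.mp h0
    have hMx₀ : ∀ n, (E * Q n * F) x₀ = 0 := by
      intro n
      simp [ContinuousLinearMap.mul_apply, hFx₀]
    rw [Metric.cauchySeq_iff]
    intro ε hε
    have hx₁' : x₁ ∈ closure ((LinearMap.range (F : H →ₗ[ℂ] H) : Submodule ℂ H) : Set H) := by
      have h1 : (K : Set H) = closure ((LinearMap.range (F : H →ₗ[ℂ] H) : Submodule ℂ H) : Set H) :=
        Submodule.topologicalClosure_coe _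
      rw [← h1]
      exact hx₁
    obtain ⟨b, hb, hdistb⟩ := Metric.mem_closure_iff.mp hx₁' (ε/4) (by positivity)
    obtain ⟨y, rfl⟩ := LinearMap.mem_range.mp (SetLike.mem_coe.mp hb)
    have hev := (haux ‖y‖).eventually_lt_const (show (0:ℝ) < ε/4 by positivity)
    obtain ⟨N, hN⟩ := Filter.eventually_atTop.mp hev
    refine ⟨N, fun m hm n hn => ?_⟩
    have hxeq : ∀ k, (E * Q k * F) x = (E * Q k * F) x₁ := by
      intro k
      rw [hxsum, map_add, hMx₀ k, add_zero]
    rw [dist_eq_norm, hxeq m, hxeq n]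
    have hsplit : (E * Q m * F) x₁ - (E * Q n * F) x₁ =
        ((E * Q m * F) x₁ - (E * Q m * F) ((F : H →ₗ[ℂ] H) y))
        + (((E * Q m * F) ((F : H →ₗ[ℂ] H) y) - E y)
        + ((E y - (E * Q n * F) ((F : H →ₗ[ℂ] H) y))
        + ((E * Q n * F) ((F : H →ₗ[ℂ] H) y) - (E * Q n * F) x₁))) := by abel
    have hcoe : ((F : H →ₗ[ℂ] H) y : H) = F y := rfl
    have hd : ‖x₁ - F y‖ < ε / 4 := by
      rw [← dist_eq_norm]
      simpa [hcoe] using hdistb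
    have t1 : ‖(E * Q m * F) x₁ - (E * Q m * F) (F y)‖ < ε / 4 := by
      rw [← map_sub]
      calc ‖(E * Q m * F) (x₁ - F y)‖ ≤ ‖x₁ - F y‖ := bound1 m _
        _ < ε / 4 := hd
    have t4 : ‖(E * Q n * F) (F y) - (E * Q n * F) x₁‖ < ε / 4 := by
      rw [← map_sub]
      calc ‖(E * Q n * F) (F y - x₁)‖ ≤ ‖F y - x₁‖ := bound1 n _
        _ < ε / 4 := by rwa [norm_sub_rev]
    have t2 : ‖(E * Q m * F) (F y) - E y‖ < ε / 4 :=
      lt_of_le_of_lt (bound2 m y) (hN m hm)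
    have t3 : ‖E y - (E * Q n * F) (F y)‖ < ε / 4 := by
      rw [norm_sub_rev]
      exact lt_of_le_of_lt (bound2 n y) (hN n hn)
    calc ‖(E * Q m * F) x₁ - (E * Q n * F) x₁‖
        ≤ ‖(E * Q m * F) x₁ - (E * Q m * F) (F y)‖
          + (‖(E * Q m * F) (F y) - E y‖
          + (‖E y - (E * Q n * F) (F y)‖
          + ‖(E * Q n * F) (F y) - (E * Q n * F) x₁‖)) := by
          rw [hsplit]
          simp only [hcoe]
          exact le_trans (norm_add_le _ _) (by
            gcongr
            exact le_trans (norm_add_le _ _) (by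
              gcongr
              exact norm_add_le _ _))
      _ < ε / 4 + (ε / 4 + (ε / 4 + ε / 4)) := by
          gcongr
      _ = ε := by ring
  choose Mf hMf using key
  have hadd : ∀ x y : H, Mf (x + y) = Mf x + Mf y := by
    intro x y
    refine tendsto_nhds_unique (hMf (x + y)) ?_
    have h := (hMf x).add (hMf y)
    simpa [map_add] using h
  have hsmulM : ∀ (a : ℂ) (x : H), Mf (a • x) = a • Mf x := by
    intro a x
    refine tendsto_nhds_unique (hMf (a • x)) ?_
    have h := (hMf x).const_smul a
    simpa [map_smul] using h
  have hbound : ∀ x, ‖Mf x‖ ≤ 1 * ‖x‖ := by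
    intro x
    refine le_of_tendsto (hMf x).norm (Filter.Eventually.of_forall fun n => ?_)
    simpa using bound1 n x
  set Mlin : H →ₗ[ℂ] H :=
    { toFun := Mf, map_add' := hadd, map_smul' := hsmulM } with hMlin
  refine ⟨Mlin.mkContinuous 1 hbound, ?_, ?_⟩
  · exact LinearMap.mkContinuous_norm_le _ zero_le_one _
  · ext y
    have h1 : Filter.Tendsto (fun n => (E * Q n * F) (F y)) Filter.atTop (nhds (E y)) := by
      rw [tendsto_iff_norm_sub_tendsto_zero]
      exact squeeze_zero (fun n => norm_nonneg _) (fun n => bound2 n y) (haux ‖y‖)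
    have h2 := hMf (F y)
    have h3 : Mf (F y) = E y := tendsto_nhds_unique h2 h1
    simpa [ContinuousLinearMap.comp_apply, LinearMap.mkContinuous_apply, hMlin] using h3

end Stmt17Aux

open Stmt17Aux in
theorem stmt17 (W11 W12 W21 W22 V11 V12 V21 V22 : H →L[ℂ] H)
    -- `W* J W ≤ J` for `J = [[0, -I], [-I, 0]]`, written blockwise:
    (hJ : ∀ x y : H, (inner ℂ x y : ℂ).re ≤
      (inner ℂ (W11 x + W12 y) (W21 x + W22 y) : ℂ).re)
    -- `V = [[V11, V12], [V21, V22]]` is the (two-sided) inverse of `W`: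
    (hWV1 : W11 ∘L V11 + W12 ∘L V21 = 1) (hWV2 : W11 ∘L V12 + W12 ∘L V22 = 0)
    (hWV3 : W21 ∘L V11 + W22 ∘L V21 = 0) (hWV4 : W21 ∘L V12 + W22 ∘L V22 = 1)
    (hVW1 : V11 ∘L W11 + V12 ∘L W21 = 1) (hVW2 : V11 ∘L W12 + V12 ∘L W22 = 0)
    (hVW3 : V21 ∘L W11 + V22 ∘L W21 = 0) (hVW4 : V21 ∘L W12 + V22 ∘L W22 = 1)
    (A B : H →L[ℂ] H) (hA : (opRe A).IsPositive) (hB : (opRe B).IsPositive)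
    (DAinv DBinv : H →L[ℂ] H)
    (hDA1 : (W21 ∘L A + W22) ∘L DAinv = 1) (hDA2 : DAinv ∘L (W21 ∘L A + W22) = 1)
    (hDB1 : (W21 ∘L B + W22) ∘L DBinv = 1) (hDB2 : DBinv ∘L (W21 ∘L B + W22) = 1)
    (X : H →L[ℂ] H) (hX : A - B = sqrtRe A ∘L X ∘L sqrtRe B) :
    ∃ XW : H →L[ℂ] H, ‖XW‖ ≤ ‖X‖ ∧
      (W11 ∘L A + W12) ∘L DAinv - (W11 ∘L B + W12) ∘L DBinv =
        sqrtRe ((W11 ∘L A + W12) ∘L DAinv) ∘L XW ∘L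
          sqrtRe ((W11 ∘L B + W12) ∘L DBinv) := by
  classical
  set TA : H →L[ℂ] H := (W11 ∘L A + W12) ∘L DAinv with hTAdef
  set TB : H →L[ℂ] H := (W11 ∘L B + W12) ∘L DBinv with hTBdef
  set C : H →L[ℂ] H := W11 - TA ∘L W21 with hCdef
  -- pointwise composition identities
  have happA : ∀ z : H, W11 (A (DAinv z)) + W12 (DAinv z) = TA z := by
    intro z
    rw [hTAdef]
    simp [ContinuousLinearMap.add_apply, ContinuousLinearMap.comp_apply]
  have happA2 : ∀ z : H, W21 (A (DAinv z)) + W22 (DAinv z) = z := by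
    intro z
    have h := DFunLike.congr_fun hDA1 z
    simpa [ContinuousLinearMap.add_apply, ContinuousLinearMap.comp_apply] using h
  have happB : ∀ z : H, W11 (B (DBinv z)) + W12 (DBinv z) = TB z := by
    intro z
    rw [hTBdef]
    simp [ContinuousLinearMap.add_apply, ContinuousLinearMap.comp_apply]
  have happB2 : ∀ z : H, W21 (B (DBinv z)) + W22 (DBinv z) = z := by
    intro z
    have h := DFunLike.congr_fun hDB1 z
    simpa [ContinuousLinearMap.add_apply, ContinuousLinearMap.comp_apply] using h
  -- operator identity `TA ∘ (W21∘A + W22) = W11∘A + W12`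
  have hTADA : TA ∘L (W21 ∘L A + W22) = W11 ∘L A + W12 := by
    rw [hTAdef, comp_assoc, hDA2, comp_one']
  -- `C ∘ A = TA ∘ W22 - W12`
  have claim1 : C ∘L A = TA ∘L W22 - W12 := by
    have h2 : TA ∘L (W21 ∘L A) + TA ∘L W22 = W11 ∘L A + W12 := by
      rw [← comp_add, hTADA]
    rw [hCdef, sub_comp, comp_assoc]
    rw [sub_eq_sub_iff_add_eq_add]
    rw [← h2]
    abel
  -- pointwise versions
  have claim1app : ∀ z : H, TA (W22 z) - W12 z = C (A z) := by
    intro z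
    have h := DFunLike.congr_fun claim1 z
    simp only [ContinuousLinearMap.comp_apply, ContinuousLinearMap.sub_apply] at h
    rw [h]
  have claim2app : ∀ z : H, TA (W21 z) - W11 z = -(C z) := by
    intro z
    rw [hCdef]
    simp only [ContinuousLinearMap.sub_apply, ContinuousLinearMap.comp_apply]
    abel
  -- positivity of the real parts of TA and TB
  have reA_nonneg : ∀ z : H, 0 ≤ (inner ℂ (A z) z : ℂ).re := by
    intro z
    have := hA.2 z
    rw [ContinuousLinearMap.reApplyInnerSelf_apply] at this
    simpa [re_inner_opRe] using this
  have reB_nonneg : ∀ z : H, 0 ≤ (inner ℂ (B z) z : ℂ).re := by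
    intro z
    have := hB.2 z
    rw [ContinuousLinearMap.reApplyInnerSelf_apply] at this
    simpa [re_inner_opRe] using this
  have reTA_ge : ∀ v : H, (inner ℂ (A (DAinv v)) (DAinv v) : ℂ).re ≤ (inner ℂ (TA v) v : ℂ).re := by
    intro v
    have h := hJ (A (DAinv v)) (DAinv v)
    rwa [happA v, happA2 v] at h
  have reTB_ge : ∀ v : H, (inner ℂ (B (DBinv v)) (DBinv v) : ℂ).re ≤ (inner ℂ (TB v) v : ℂ).re := by
    intro v
    have h := hJ (B (DBinv v)) (DBinv v)
    rwa [happB v, happB2 v] at h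
  have hposTA : (opRe TA).IsPositive := by
    refine ⟨ContinuousLinearMap.isSelfAdjoint_iff_isSymmetric.mp (isSelfAdjoint_opRe TA), fun v => ?_⟩
    rw [ContinuousLinearMap.reApplyInnerSelf_apply]
    have h1 : 0 ≤ (inner ℂ (TA v) v : ℂ).re := le_trans (reA_nonneg _) (reTA_ge v)
    simpa [re_inner_opRe] using h1
  have hposTB : (opRe TB).IsPositive := by
    refine ⟨ContinuousLinearMap.isSelfAdjoint_iff_isSymmetric.mp (isSelfAdjoint_opRe TB), fun v => ?_⟩
    rw [ContinuousLinearMap.reApplyInnerSelf_apply]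
    have h1 : 0 ≤ (inner ℂ (TB v) v : ℂ).re := le_trans (reB_nonneg _) (reTB_ge v)
    simpa [re_inner_opRe] using h1
  -- KEY inequality (I): for TB
  have key1 : ∀ v : H, ‖(sqrtRe B ∘L DBinv) v‖ ≤ ‖sqrtRe TB v‖ := by
    intro v
    have h1 : ‖sqrtRe B (DBinv v)‖ ^ 2 ≤ ‖sqrtRe TB v‖ ^ 2 := by
      rw [norm_sqrtRe_sq B hB, norm_sqrtRe_sq TB hposTB]
      exact reTB_ge v
    have h2 := norm_nonneg (sqrtRe B (DBinv v))
    have h3 := norm_nonneg (sqrtRe TB v)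
    rw [ContinuousLinearMap.comp_apply]
    nlinarith
  -- KEY inequality (II): for TA, with the left factor C
  have key2 : ∀ v : H, ‖(sqrtRe A ∘L ContinuousLinearMap.adjoint C) v‖ ≤ ‖sqrtRe TA v‖ := by
    intro v
    set c : H := ContinuousLinearMap.adjoint C v with hc
    set w : H := W22 c - W21 (ContinuousLinearMap.adjoint A c) - v with hw
    set g : H := DAinv w with hg
    -- the two block identities
    have h1 : W21 (A g) + W22 g = w := happA2 w
    have h2 : W11 (A g) + W12 g = TA w := happA w
    have hβ : W21 (-(ContinuousLinearMap.adjoint A c) - A g) + W22 (c - g) = v := by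
      have e : W21 (-(ContinuousLinearMap.adjoint A c) - A g) + W22 (c - g)
          = (W22 c - W21 (ContinuousLinearMap.adjoint A c)) - (W21 (A g) + W22 g) := by
        simp only [map_sub, map_neg]
        abel
      rw [e, h1, hw]
      abel
    have hα : W11 (-(ContinuousLinearMap.adjoint A c) - A g) + W12 (c - g)
        = TA v - C (A c) - C (ContinuousLinearMap.adjoint A c) := by
      have e : W11 (-(ContinuousLinearMap.adjoint A c) - A g) + W12 (c - g)
          = (W12 c - W11 (ContinuousLinearMap.adjoint A c)) - (W11 (A g) + W12 g) := by
        simp only [map_sub, map_neg]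
        abel
      rw [e, h2, hw]
      have e2 : TA (W22 c - W21 (ContinuousLinearMap.adjoint A c) - v)
          = TA (W22 c) - TA (W21 (ContinuousLinearMap.adjoint A c)) - TA v := by
        simp only [map_sub]
      rw [e2]
      have e3 := claim1app c
      have e4 := claim2app (ContinuousLinearMap.adjoint A c)
      -- goal: W12 c - W11 (A† c) - (TA (W22 c) - TA (W21 (A† c)) - TA v)
      --     = TA v - C (A c) - C (A† c)
      rw [← e3] at *
      have : W12 c - W11 (ContinuousLinearMap.adjoint A c)
            - (TA (W22 c) - TA (W21 (ContinuousLinearMap.adjoint A c)) - TA v)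
          = TA v - (TA (W22 c) - W12 c)
            + (TA (W21 (ContinuousLinearMap.adjoint A c))
              - W11 (ContinuousLinearMap.adjoint A c)) := by abel
      rw [this, e3, e4]
      abel
    -- apply hJ
    have hineq := hJ (-(ContinuousLinearMap.adjoint A c) - A g) (c - g)
    rw [hα, hβ] at hineq
    -- expand the left side
    have hL : (inner ℂ (-(ContinuousLinearMap.adjoint A c) - A g) (c - g) : ℂ).re
        = -(inner ℂ (A c) c : ℂ).re + (inner ℂ (A g) g : ℂ).re := by
      have hcancel : (inner ℂ (ContinuousLinearMap.adjoint A c) g : ℂ).re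
          = (inner ℂ (A g) c : ℂ).re := by
        rw [adjoint_inner_left]
        exact re_symm c (A g)
      have hAc : (inner ℂ (ContinuousLinearMap.adjoint A c) c : ℂ).re
          = (inner ℂ (A c) c : ℂ).re := by
        rw [adjoint_inner_left]
        exact re_symm c (A c)
      simp only [inner_sub_left, inner_sub_right, inner_neg_left, Complex.sub_re,
        Complex.neg_re]
      rw [hcancel, hAc]
      ring
    -- expand the right side
    have hR : (inner ℂ (TA v - C (A c) - C (ContinuousLinearMap.adjoint A c)) v : ℂ).re
        = (inner ℂ (TA v) v : ℂ).re - (inner ℂ (A c) c : ℂ).re - (inner ℂ (A c) c : ℂ).re := by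
      have hC1 : (inner ℂ (C (A c)) v : ℂ) = inner ℂ (A c) c := by
        rw [← adjoint_inner_right, hc]
      have hC2 : (inner ℂ (C (ContinuousLinearMap.adjoint A c)) v : ℂ).re
          = (inner ℂ (A c) c : ℂ).re := by
        rw [← adjoint_inner_right, ← hc]
        have : (inner ℂ (ContinuousLinearMap.adjoint A c) c : ℂ).re
            = (inner ℂ (A c) c : ℂ).re := by
          rw [adjoint_inner_left]
          exact re_symm c (A c)
        exact this
      simp only [inner_sub_left, Complex.sub_re]
      rw [hC1, hC2]
    rw [hL, hR] at hineq
    have hAgg : 0 ≤ (inner ℂ (A g) g : ℂ).re := reA_nonneg g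
    have hfin : (inner ℂ (A c) c : ℂ).re ≤ (inner ℂ (TA v) v : ℂ).re := by linarith
    have h1 : ‖sqrtRe A c‖ ^ 2 ≤ ‖sqrtRe TA v‖ ^ 2 := by
      rw [norm_sqrtRe_sq A hA, norm_sqrtRe_sq TA hposTA]
      exact hfin
    have h2 := norm_nonneg (sqrtRe A c)
    have h3 := norm_nonneg (sqrtRe TA v)
    rw [ContinuousLinearMap.comp_apply, ← hc]
    nlinarith
  -- Douglas factorizations
  obtain ⟨M, hM1, hM2⟩ := douglas (sqrtRe TB) (sqrtRe B ∘L DBinv) (sqrtRe_sa TB) key1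
  obtain ⟨K, hK1, hK2⟩ :=
    douglas (sqrtRe TA) (sqrtRe A ∘L ContinuousLinearMap.adjoint C) (sqrtRe_sa TA) key2
  have hKadj : sqrtRe TA ∘L ContinuousLinearMap.adjoint K = C ∘L sqrtRe A := by
    have h := congrArg ContinuousLinearMap.adjoint hK2
    rw [adjoint_comp, adjoint_comp, (sqrtRe_sa TA).adjoint_eq, (sqrtRe_sa A).adjoint_eq,
      adjoint_adjoint] at h
    exact h
  -- difference identity : TA - TB = C ∘ (A - B) ∘ DBinv
  have hdiff : TA - TB = (C ∘L (A - B)) ∘L DBinv := by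
    have e2 : C ∘L B = W11 ∘L B - (TA ∘L W21) ∘L B := by
      rw [hCdef, sub_comp]
    have e5 : C ∘L (A - B) = TA ∘L (W21 ∘L B + W22) - (W11 ∘L B + W12) := by
      rw [comp_sub, claim1, e2, comp_add, comp_assoc]
      abel
    rw [e5, sub_comp, comp_assoc, hDB1, comp_one']
  -- assemble
  refine ⟨ContinuousLinearMap.adjoint K ∘L X ∘L M, ?_, ?_⟩
  · calc ‖ContinuousLinearMap.adjoint K ∘L X ∘L M‖
        ≤ ‖ContinuousLinearMap.adjoint K‖ * ‖X ∘L M‖ := opNorm_comp_le _ _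
      _ ≤ ‖ContinuousLinearMap.adjoint K‖ * (‖X‖ * ‖M‖) := by
          gcongr
          exact opNorm_comp_le _ _
      _ = ‖K‖ * (‖X‖ * ‖M‖) := by
          rw [LinearIsometryEquiv.norm_map]
      _ ≤ 1 * (‖X‖ * 1) := by
          apply mul_le_mul hK1 (mul_le_mul_of_nonneg_left hM1 (norm_nonneg X))
            (by positivity) zero_le_one
      _ = ‖X‖ := by ring
  · symm
    calc sqrtRe TA ∘L (ContinuousLinearMap.adjoint K ∘L X ∘L M) ∘L sqrtRe TB
        = (sqrtRe TA ∘L ContinuousLinearMap.adjoint K) ∘L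
            (X ∘L (M ∘L sqrtRe TB)) := by simp only [comp_assoc]
      _ = (C ∘L sqrtRe A) ∘L (X ∘L (sqrtRe B ∘L DBinv)) := by rw [hKadj, hM2]
      _ = (C ∘L (sqrtRe A ∘L X ∘L sqrtRe B)) ∘L DBinv := by simp only [comp_assoc]
      _ = (C ∘L (A - B)) ∘L DBinv := by rw [← hX]
      _ = TA - TB := hdiff.symm
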